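/- Let c : (ℕ → Bool) → [0,1] be the map c(x) = Σ_{n∈ℕ} x(n)/2^{n+1} (reading true as 1 and false as 0). A subset X of the unit interval [0,1] has strong measure zero if, and only if, c⁻¹(X) has strong measure zero as a subset of the Cantor space. -/

import Mathlib

-- The Cantor space `ℕ → Bool` carries the metric `dist x y = (1/2)^n`, where `n` is the
-- least index at which `x` and `y` differ; the unit interval carries the metric from `ℝ`.
attribute [local instance] PiNat.metricSpace

/-- A subset `X` of a metric space `Y` has strong measure zero if for every sequence
`(ε n)` of positive reals there is a sequence `(U n)` of subsets of `Y` with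
`diam (U n) ≤ ε n` for every `n` whose union covers `X`. -/
def HasStrongMeasureZero {Y : Type*} [MetricSpace Y] (X : Set Y) : Prop :=
  ∀ ε : ℕ → ℝ, (∀ n, 0 < ε n) →
    ∃ U : ℕ → Set Y, (∀ n, EMetric.diam (U n) ≤ ENNReal.ofReal (ε n)) ∧ X ⊆ ⋃ n, U n

lemma cantorSum_mem_Icc (x : ℕ → Bool) :
    (∑' n : ℕ, (if x n then (1 : ℝ) else 0) / 2 ^ (n + 1)) ∈ Set.Icc (0 : ℝ) 1 := by
  have key : ∀ n : ℕ, (1 : ℝ) / 2 / 2 ^ n = 1 / 2 ^ (n + 1) := by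
    intro n; rw [pow_succ]; ring
  have hle : ∀ n : ℕ, (if x n then (1 : ℝ) else 0) / 2 ^ (n + 1) ≤ 1 / 2 / 2 ^ n := by
    intro n
    rw [key n]
    by_cases h : x n <;> simp [h]
  have hnn : ∀ n : ℕ, 0 ≤ (if x n then (1 : ℝ) else 0) / 2 ^ (n + 1) := by
    intro n
    by_cases h : x n <;> simp [h]
  constructor
  · exact tsum_nonneg hnn
  · calc (∑' n : ℕ, (if x n then (1 : ℝ) else 0) / 2 ^ (n + 1))
        ≤ ∑' n : ℕ, (1 : ℝ) / 2 / 2 ^ n := by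
          refine Summable.tsum_le_tsum hle ?_ ?_
          · exact Summable.of_nonneg_of_le hnn hle (summable_geometric_two' 1)
          · exact summable_geometric_two' 1
      _ = 1 := tsum_geometric_two' 1

/-- The canonical map `c : (ℕ → Bool) → [0,1]`, `c x = ∑ x n / 2 ^ (n + 1)`. -/
noncomputable def cantorMap (x : ℕ → Bool) : Set.Icc (0 : ℝ) 1 :=
  ⟨∑' n : ℕ, (if x n then (1 : ℝ) else 0) / 2 ^ (n + 1), cantorSum_mem_Icc x⟩

/-! ### Auxiliary definitions and lemmas -/

set_option maxHeartbeats 1000000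

/-- The real value of the cantor map. -/
noncomputable def cv (x : ℕ → Bool) : ℝ := ∑' n : ℕ, (if x n then (1:ℝ) else 0) / 2 ^ (n+1)

lemma cantorMap_val (x : ℕ → Bool) : (cantorMap x : ℝ) = cv x := rfl

lemma cv_summable (x : ℕ → Bool) :
    Summable (fun n => (if x n then (1:ℝ) else 0) / 2 ^ (n+1)) := by
  have hnn : ∀ n : ℕ, 0 ≤ (if x n then (1:ℝ) else 0) / 2 ^ (n+1) := by
    intro n; by_cases h : x n <;> simp [h]
  have hle : ∀ n : ℕ, (if x n then (1:ℝ) else 0) / 2 ^ (n+1) ≤ 1/2/2^n := by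
    intro n; have : (1:ℝ)/2/2^n = 1/2^(n+1) := by rw [pow_succ]; ring
    rw [this]; by_cases h : x n <;> simp [h]
  exact Summable.of_nonneg_of_le hnn hle (summable_geometric_two' 1)

lemma half_pow_succ_tsum : (∑' n : ℕ, ((1:ℝ)/2)^(n+1)) = 1 := by
  have h : ∀ n : ℕ, ((1:ℝ)/2)^(n+1) = 1/2/2^n := by
    intro n; rw [pow_succ, div_pow, one_pow]; ring
  simp_rw [h]; exact tsum_geometric_two' 1

lemma tail_nonneg (x : ℕ → Bool) (m : ℕ) :
    0 ≤ ∑' k : ℕ, (if x (k+m) then (1:ℝ) else 0) / 2 ^ (k+m+1) := by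
  apply tsum_nonneg; intro k; by_cases h : x (k+m) <;> simp [h]

lemma tail_le (x : ℕ → Bool) (m : ℕ) :
    (∑' k : ℕ, (if x (k+m) then (1:ℝ) else 0) / 2 ^ (k+m+1)) ≤ (1/2)^m := by
  have hsum : Summable (fun k => (if x (k+m) then (1:ℝ) else 0) / 2 ^ (k+m+1)) :=
    (cv_summable x).comp_injective (add_left_injective m)
  have hgeo : Summable (fun k : ℕ => ((1:ℝ)/2)^(k+m+1)) := by
    apply Summable.comp_injective _ (add_left_injective (m+1))
    · exact summable_geometric_of_lt_one (by norm_num) (by norm_num)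
  have hle : ∀ k : ℕ, (if x (k+m) then (1:ℝ) else 0) / 2 ^ (k+m+1) ≤ ((1:ℝ)/2)^(k+m+1) := by
    intro k
    have : ((1:ℝ)/2)^(k+m+1) = 1/2^(k+m+1) := by rw [div_pow, one_pow]
    rw [this]; by_cases h : x (k+m) <;> simp [h]
  calc (∑' k : ℕ, (if x (k+m) then (1:ℝ) else 0) / 2 ^ (k+m+1))
      ≤ ∑' k : ℕ, ((1:ℝ)/2)^(k+m+1) := Summable.tsum_le_tsum hle hsum hgeo
    _ = ((1:ℝ)/2)^m * ∑' k : ℕ, ((1:ℝ)/2)^(k+1) := by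
        rw [← tsum_mul_left]; congr 1; ext k; rw [← pow_add]; ring_nf
    _ = (1/2)^m := by rw [half_pow_succ_tsum, mul_one]

lemma cv_split (x : ℕ → Bool) (m : ℕ) :
    cv x = (∑ k ∈ Finset.range m, (if x k then (1:ℝ) else 0) / 2 ^ (k+1))
      + ∑' k : ℕ, (if x (k+m) then (1:ℝ) else 0) / 2 ^ (k+m+1) := by
  have hs : Summable (fun k : ℕ => (if x (k+m) then (1:ℝ) else 0) / 2 ^ (k+m+1)) :=
    (cv_summable x).comp_injective (add_left_injective m)
  have h := Summable.sum_add_tsum_nat_add' (f := fun n => (if x n then (1:ℝ) else 0)/2^(n+1)) (k := m) hs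
  exact h.symm

/-- The number encoded by the first `m` binary digits. -/
def nf (m : ℕ) (x : ℕ → Bool) : ℕ := ∑ k ∈ Finset.range m, (if x k then 2^(m-1-k) else 0)

lemma nf_succ (m : ℕ) (x : ℕ → Bool) :
    nf (m+1) x = (if x 0 then 2^m else 0) + nf m (fun k => x (k+1)) := by
  unfold nf
  rw [Finset.sum_range_succ']
  rw [add_comm]
  congr 1
  · apply Finset.sum_congr rfl
    intro k _
    have h1 : m + 1 - 1 - (k+1) = m - 1 - k := by omega
    rw [h1]

lemma nf_lt (m : ℕ) (x : ℕ → Bool) : nf m x < 2^m := by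
  induction m generalizing x with
  | zero => simp [nf]
  | succ m ih =>
    rw [nf_succ]
    have := ih (fun k => x (k+1))
    by_cases h : x 0 <;> simp [h, pow_succ] <;> omega

lemma nf_inj {m : ℕ} {x y : ℕ → Bool} (h : nf m x = nf m y) :
    ∀ k < m, x k = y k := by
  induction m generalizing x y with
  | zero => omega
  | succ m ih =>
    rw [nf_succ, nf_succ] at h
    have hx := nf_lt m (fun k => x (k+1))
    have hy := nf_lt m (fun k => y (k+1))
    have h0 : x 0 = y 0 := by
      by_cases h1 : x 0 <;> by_cases h2 : y 0 <;> simp [h1, h2] at h ⊢ <;> omega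
    have ht : nf m (fun k => x (k+1)) = nf m (fun k => y (k+1)) := by
      rw [h0] at h; by_cases h2 : y 0 <;> simp [h2] at h <;> omega
    intro k hk
    match k with
    | 0 => exact h0
    | k+1 => exact ih ht k (by omega)

lemma nf_sum (m : ℕ) (x : ℕ → Bool) :
    (∑ k ∈ Finset.range m, (if x k then (1:ℝ) else 0) / 2 ^ (k+1)) = (nf m x : ℝ) / 2^m := by
  unfold nf
  push_cast
  rw [Finset.sum_div]
  apply Finset.sum_congr rfl
  intro k hk
  rw [Finset.mem_range] at hk
  by_cases h : x k <;> simp only [h, if_true, if_false]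
  · rw [div_eq_div_iff (by positivity) (by positivity)]
    rw [one_mul, ← pow_add]
    congr 1
    omega
  · simp

lemma nf_bounds (m : ℕ) (x : ℕ → Bool) :
    (nf m x : ℝ) / 2^m ≤ cv x ∧ cv x ≤ (nf m x : ℝ) / 2^m + (1/2)^m := by
  have h := cv_split x m
  rw [nf_sum] at h
  constructor
  · rw [h]; linarith [tail_nonneg x m]
  · rw [h]; linarith [tail_le x m]

lemma nf_close {x y : ℕ → Bool} {m : ℕ} (h : cv x - cv y ≤ (1/2)^(m+1)) :
    nf m x ≤ nf m y + 1 := by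
  have hx := (nf_bounds m x).1
  have hy := (nf_bounds m y).2
  have hpow : (0:ℝ) < 2^m := by positivity
  have hhalf : ((1:ℝ)/2)^m = 1/2^m := by rw [div_pow, one_pow]
  have hhalf1 : ((1:ℝ)/2)^(m+1) = 1/2^m/2 := by
    rw [div_pow, one_pow, pow_succ]; ring
  have key : (nf m x : ℝ) < (nf m y : ℝ) + 2 := by
    have A : (nf m x : ℝ) ≤ cv x * 2^m := by
      rw [div_le_iff₀ hpow] at hx; exact hx
    have hy' : cv y ≤ ((nf m y : ℝ) + 1) / 2^m := by
      rw [hhalf] at hy; rw [add_div]; linarith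
    have B : cv y * 2^m ≤ (nf m y : ℝ) + 1 := by
      rw [← le_div_iff₀ hpow]; exact hy'
    have C : (cv x - cv y) * 2^m ≤ 1/2 := by
      have hC := mul_le_mul_of_nonneg_right h (le_of_lt hpow)
      have hC2 : ((1:ℝ)/2^m/2) * 2^m = 1/2 := by field_simp
      rw [hhalf1] at hC
      rw [hC2] at hC
      exact hC
    have expand : cv x * 2^m = (cv x - cv y) * 2^m + cv y * 2^m := by ring
    linarith
  have : (nf m x : ℕ) < nf m y + 2 := by exact_mod_cast key
  omega

lemma cv_lipschitz (x y : ℕ → Bool) : |cv x - cv y| ≤ dist x y := by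
  rcases eq_or_ne x y with rfl | hne
  · simp
  set n := PiNat.firstDiff x y with hn
  rw [PiNat.dist_eq_of_ne hne]
  set g : ℕ → ℝ := fun k => if k < n then 0 else (1/2)^(k+1) with hg
  have hgsum : Summable g := by
    have h1 : ∀ k, 0 ≤ g k := by
      intro k; by_cases h : k < n
      · simp [hg, h]
      · simp only [hg, h, if_false]; positivity
    have h2 : ∀ k, g k ≤ ((1:ℝ)/2)^k := by
      intro k; by_cases h : k < n
      · simp only [hg, h, if_true]; positivity
      · simp only [hg, h, if_false]
        exact pow_le_pow_of_le_one (by norm_num) (by norm_num) (by omega)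
    exact Summable.of_nonneg_of_le h1 h2
      (summable_geometric_of_lt_one (by norm_num) (by norm_num))
  have key : cv x - cv y = ∑' k, ((if x k then (1:ℝ) else 0) / 2 ^ (k+1)
      - (if y k then (1:ℝ) else 0) / 2 ^ (k+1)) := by
    rw [Summable.tsum_sub (cv_summable x) (cv_summable y)]; rfl
  have habs : ∀ k, |(if x k then (1:ℝ) else 0) / 2 ^ (k+1)
      - (if y k then (1:ℝ) else 0) / 2 ^ (k+1)| ≤ g k := by
    intro k
    by_cases hk : k < n
    · have : x k = y k := PiNat.apply_eq_of_lt_firstDiff hk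
      simp [hg, hk, this]
    · have h1 : ((1:ℝ)/2)^(k+1) = 1/2^(k+1) := by rw [div_pow, one_pow]
      simp only [hg, hk, if_false, h1]
      have hx01 : 0 ≤ (if x k then (1:ℝ) else 0)/2^(k+1) ∧
          (if x k then (1:ℝ) else 0)/2^(k+1) ≤ 1/2^(k+1) := by
        by_cases h : x k <;> simp [h] <;> positivity
      have hy01 : 0 ≤ (if y k then (1:ℝ) else 0)/2^(k+1) ∧
          (if y k then (1:ℝ) else 0)/2^(k+1) ≤ 1/2^(k+1) := by
        by_cases h : y k <;> simp [h] <;> positivity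
      rw [abs_sub_le_iff]
      constructor <;> linarith [hx01.1, hx01.2, hy01.1, hy01.2]
  have hsub : Summable (fun k => (if x k then (1:ℝ) else 0) / 2 ^ (k+1)
      - (if y k then (1:ℝ) else 0) / 2 ^ (k+1)) := (cv_summable x).sub (cv_summable y)
  have hgval : (∑' k, g k) = (1/2)^n := by
    have hs : Summable (fun k : ℕ => g (k + n)) := hgsum.comp_injective (add_left_injective n)
    have h := Summable.sum_add_tsum_nat_add' (f := g) (k := n) hs
    have h1 : (∑ k ∈ Finset.range n, g k) = 0 := by
      apply Finset.sum_eq_zero; intro k hk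
      rw [Finset.mem_range] at hk; simp [hg, hk]
    have h2 : (∑' k : ℕ, g (k + n)) = (1/2)^n := by
      have he : ∀ k : ℕ, g (k + n) = ((1:ℝ)/2)^n * ((1:ℝ)/2)^(k+1) := by
        intro k
        have : ¬ (k + n < n) := by omega
        simp only [hg, this, if_false]
        rw [← pow_add]; congr 1; omega
      simp_rw [he]
      rw [tsum_mul_left, half_pow_succ_tsum, mul_one]
    rw [← h, h1, zero_add, h2]
  calc |cv x - cv y| = |∑' k, ((if x k then (1:ℝ) else 0) / 2 ^ (k+1)
        - (if y k then (1:ℝ) else 0) / 2 ^ (k+1))| := by rw [key]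
    _ ≤ ∑' k, |(if x k then (1:ℝ) else 0) / 2 ^ (k+1)
        - (if y k then (1:ℝ) else 0) / 2 ^ (k+1)| := by
        have := norm_tsum_le_tsum_norm (f := fun k => (if x k then (1:ℝ) else 0) / 2 ^ (k+1)
          - (if y k then (1:ℝ) else 0) / 2 ^ (k+1)) (by simpa [Real.norm_eq_abs] using hsub.abs)
        simpa [Real.norm_eq_abs] using this
    _ ≤ ∑' k, g k := Summable.tsum_le_tsum habs hsub.abs hgsum
    _ = (1/2)^n := hgval

lemma cv_one : cv (fun _ => true) = 1 := by
  have h : cv (fun _ => true) = ∑' n : ℕ, (1:ℝ)/2/2^n := by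
    unfold cv; congr 1; ext n; rw [if_pos rfl, pow_succ]; ring
  rw [h]; exact tsum_geometric_two' 1

lemma cv_surj {r : ℝ} (h0 : 0 ≤ r) (h1 : r ≤ 1) : ∃ x : ℕ → Bool, cv x = r := by
  rcases eq_or_lt_of_le h1 with rfl | h1
  · exact ⟨fun _ => true, cv_one⟩
  set b : ℕ → Bool := fun n => decide (⌊r * 2^(n+1)⌋ = 2 * ⌊r * 2^n⌋ + 1) with hb
  have hfloor : ∀ n : ℕ, ⌊r * 2^(n+1)⌋ = 2 * ⌊r * 2^n⌋ ∨ ⌊r * 2^(n+1)⌋ = 2 * ⌊r * 2^n⌋ + 1 := by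
    intro n
    have h2 : r * 2^(n+1) = 2 * (r * 2^n) := by rw [pow_succ]; ring
    have hlow : (2 * ⌊r * 2^n⌋ : ℝ) ≤ r * 2^(n+1) := by
      rw [h2]; push_cast
      have := Int.floor_le (r * 2^n); linarith
    have hhigh : r * 2^(n+1) < (2 * ⌊r * 2^n⌋ + 2 : ℝ) := by
      rw [h2]; push_cast
      have := Int.lt_floor_add_one (r * 2^n); linarith
    have l1 : 2 * ⌊r * 2^n⌋ ≤ ⌊r * 2^(n+1)⌋ := Int.le_floor.2 (by exact_mod_cast hlow)
    have l2 : ⌊r * 2^(n+1)⌋ < 2 * ⌊r * 2^n⌋ + 2 := by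
      have : (⌊r * 2^(n+1)⌋ : ℝ) < 2 * ⌊r * 2^n⌋ + 2 := by linarith [Int.floor_le (r * 2^(n+1))]
      exact_mod_cast this
    omega
  have hbit : ∀ n : ℕ, (if b n then (1:ℝ) else 0) = ⌊r * 2^(n+1)⌋ - 2 * ⌊r * 2^n⌋ := by
    intro n
    rcases hfloor n with h | h
    · have : b n = false := by simp [hb, h]
      rw [this]; push_cast [h]; simp
    · have : b n = true := by simp [hb, h]
      rw [this]; push_cast [h]; simp
  have hpartial : ∀ n : ℕ,
      (∑ k ∈ Finset.range n, (if b k then (1:ℝ) else 0) / 2 ^ (k+1)) = (⌊r * 2^n⌋ : ℝ) / 2^n := by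
    intro n
    induction n with
    | zero =>
      simp
      rw [Int.floor_eq_zero_iff.2 ⟨h0, h1⟩]
      simp
    | succ n ih =>
      rw [Finset.sum_range_succ, ih, hbit n]
      have h2 : (2:ℝ)^(n+1) = 2^n * 2 := by rw [pow_succ]
      field_simp
      ring
  have htend : Filter.Tendsto (fun n : ℕ => (⌊r * 2^n⌋ : ℝ) / 2^n) Filter.atTop (nhds r) := by
    have hdiff : ∀ n : ℕ, |(⌊r * 2^n⌋ : ℝ) / 2^n - r| ≤ (1/2)^n := by
      intro n
      have hp : (0:ℝ) < 2^n := by positivity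
      have l1 : (⌊r * 2^n⌋ : ℝ) ≤ r * 2^n := Int.floor_le _
      have l2 : r * 2^n < ⌊r * 2^n⌋ + 1 := Int.lt_floor_add_one _
      have e1 : (⌊r * 2^n⌋ : ℝ) / 2^n ≤ r := by rw [div_le_iff₀ hp]; linarith
      have e2 : r ≤ (⌊r * 2^n⌋ : ℝ) / 2^n + 1/2^n := by
        rw [← add_div, le_div_iff₀ hp]; linarith
      have hpos : (0:ℝ) ≤ 1/2^n := by positivity
      rw [abs_le, div_pow, one_pow]
      constructor <;> linarith
    have hzero : Filter.Tendsto (fun n : ℕ => (⌊r * 2^n⌋ : ℝ) / 2^n - r) Filter.atTop (nhds 0) := by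
      apply squeeze_zero_norm hdiff
      exact tendsto_pow_atTop_nhds_zero_of_lt_one (by norm_num : (0:ℝ) ≤ 1/2) (by norm_num)
    have := hzero.add_const r
    simpa using this
  have hsum := (cv_summable b).hasSum.tendsto_sum_nat
  simp_rw [hpartial] at hsum
  exact ⟨b, tendsto_nhds_unique hsum htend⟩

lemma dist_cantorMap (x y : ℕ → Bool) : dist (cantorMap x) (cantorMap y) = |cv x - cv y| := by
  rw [Subtype.dist_eq, Real.dist_eq, cantorMap_val, cantorMap_val]

/-- A subset `X` of the unit interval has strong measure zero iff `c ⁻¹' X` has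
strong measure zero as a subset of the Cantor space. -/
theorem hasStrongMeasureZero_iff_preimage_cantorMap (X : Set (Set.Icc (0 : ℝ) 1)) :
    HasStrongMeasureZero X ↔ HasStrongMeasureZero (cantorMap ⁻¹' X) := by
  classical
  constructor
  · -- forward direction
    intro h ε hε
    have hεm : ∀ n : ℕ, ∃ m : ℕ,
        ((1:ℝ)/2)^m < min (ε (3*n)) (min (ε (3*n+1)) (ε (3*n+2))) := by
      intro n
      exact exists_pow_lt_of_lt_one (lt_min (hε _) (lt_min (hε _) (hε _))) (by norm_num)
    choose m hm using hεm
    set δ : ℕ → ℝ := fun n => (1/2)^(m n + 1) with hδ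
    obtain ⟨U, hdiam, hcover⟩ := h δ (fun n => by positivity)
    set x₀ : ℕ → (ℕ → Bool) := fun n =>
      if hn : (cantorMap ⁻¹' (U n)).Nonempty then hn.some else (fun _ => false) with hx₀
    set V : ℕ → Set (ℕ → Bool) := fun j =>
      {x | cantorMap x ∈ U (j/3) ∧ nf (m (j/3)) x = nf (m (j/3)) (x₀ (j/3)) - 1 + j % 3}
      with hV
    refine ⟨V, ?_, ?_⟩
    · intro j
      set q := j / 3 with hq
      apply EMetric.diam_le
      intro x hx y hy
      have hagree : dist x y ≤ ((1:ℝ)/2)^(m q) := by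
        have hnf : nf (m q) x = nf (m q) y := by
          have h1 := hx.2
          have h2 := hy.2
          rw [← hq] at h1 h2
          omega
        have hcyl : x ∈ PiNat.cylinder y (m q) :=
          PiNat.mem_cylinder_iff.2 (fun i hi => nf_inj hnf i hi)
        exact PiNat.mem_cylinder_iff_dist_le.1 hcyl
      have hle : ((1:ℝ)/2)^(m q) ≤ ε j := by
        have h3 := (hm q).le
        rcases (show j = 3*q ∨ j = 3*q+1 ∨ j = 3*q+2 by omega) with hj | hj | hj <;>
          rw [hj] <;>
        · refine le_trans h3 ?_
          simp [min_le_left, min_le_right]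
          try exact le_trans (min_le_right _ _) (by simp [min_le_left, min_le_right])
      rw [edist_dist]
      exact ENNReal.ofReal_le_ofReal (le_trans hagree hle)
    · intro x hx
      obtain ⟨n, hn⟩ := Set.mem_iUnion.1 (hcover hx)
      have hne : (cantorMap ⁻¹' (U n)).Nonempty := ⟨x, hn⟩
      have h₀mem : cantorMap (x₀ n) ∈ U n := by
        rw [hx₀]; simp only [dif_pos hne]; exact hne.some_mem
      -- distance between cv x and cv (x₀ n)
      have hdist : |cv x - cv (x₀ n)| ≤ (1/2)^(m n + 1) := by
        have h1 : edist (cantorMap x) (cantorMap (x₀ n)) ≤ ENNReal.ofReal (δ n) :=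
          le_trans (EMetric.edist_le_diam_of_mem hn h₀mem) (hdiam n)
        rw [edist_dist] at h1
        have h2 : dist (cantorMap x) (cantorMap (x₀ n)) ≤ δ n :=
          (ENNReal.ofReal_le_ofReal_iff (by positivity)).1 h1
        rw [dist_cantorMap] at h2
        exact h2
      rw [abs_sub_le_iff] at hdist
      have k1 : nf (m n) x ≤ nf (m n) (x₀ n) + 1 := nf_close hdist.1
      have k2 : nf (m n) (x₀ n) ≤ nf (m n) x + 1 := nf_close hdist.2
      obtain ⟨i, hi3, hieq⟩ : ∃ i, i < 3 ∧ nf (m n) x = nf (m n) (x₀ n) - 1 + i := by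
        refine ⟨nf (m n) x - (nf (m n) (x₀ n) - 1), by omega, by omega⟩
      refine Set.mem_iUnion.2 ⟨3*n+i, ?_⟩
      have e1 : (3*n+i)/3 = n := by omega
      have e2 : (3*n+i)%3 = i := by omega
      rw [hV]
      simp only [Set.mem_setOf_eq, e1, e2]
      exact ⟨hn, hieq⟩
  · -- reverse direction
    intro h ε hε
    obtain ⟨U, hdiam, hcover⟩ := h ε hε
    refine ⟨fun n => cantorMap '' U n, ?_, ?_⟩
    · intro n
      apply EMetric.diam_le
      rintro a ⟨x, hxU, rfl⟩ b ⟨y, hyU, rfl⟩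
      calc edist (cantorMap x) (cantorMap y)
          = ENNReal.ofReal (dist (cantorMap x) (cantorMap y)) := edist_dist _ _
        _ ≤ ENNReal.ofReal (dist x y) := by
            apply ENNReal.ofReal_le_ofReal
            rw [dist_cantorMap]
            exact cv_lipschitz x y
        _ = edist x y := (edist_dist x y).symm
        _ ≤ EMetric.diam (U n) := EMetric.edist_le_diam_of_mem hxU hyU
        _ ≤ ENNReal.ofReal (ε n) := hdiam n
    · intro r hr
      obtain ⟨x, hxval⟩ := cv_surj r.2.1 r.2.2
      have hxr : cantorMap x = r := Subtype.ext (by rw [cantorMap_val, hxval])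
      have hxX : x ∈ cantorMap ⁻¹' X := by
        rw [Set.mem_preimage, hxr]; exact hr
      obtain ⟨n, hn⟩ := Set.mem_iUnion.1 (hcover hxX)
      exact Set.mem_iUnion.2 ⟨n, ⟨x, hn, hxr⟩⟩
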